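/- arXiv:0805.2092 — 3 statements merged into one kernel-verified Lean document; each statement's English description precedes it below -/
import Mathlib

section
/- If α is an odd norm-perfect Gaussian integer, then α = π^k · γ² for some Gaussian prime π, odd positive integer k, and Gaussian integer γ with gcd(π, γ) = 1 (i.e., π does not divide γ). -/
set_option linter.unnecessarySeqFocus false in
lemma onp_dvd_iff (x : GaussianInt) :
    (⟨1, 1⟩ : GaussianInt) ∣ x ↔ Even (x.re + x.im) := by
  constructor
  · rintro ⟨y, rfl⟩
    refine ⟨y.re, ?_⟩
    simp [Zsqrtd.re_mul, Zsqrtd.im_mul]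
  · rintro ⟨c, hc⟩
    refine ⟨⟨c, c - x.re⟩, ?_⟩
    ext <;> simp [Zsqrtd.re_mul, Zsqrtd.im_mul] <;> omega

lemma onp_two_dvd_norm_iff (x : GaussianInt) :
    2 ∣ Zsqrtd.norm x ↔ Even (x.re + x.im) := by
  have h : Zsqrtd.norm x = x.re * x.re + x.im * x.im := by
    rw [Zsqrtd.norm_def]; ring
  rw [h, ← even_iff_two_dvd]
  simp only [Int.even_add, Int.even_mul]
  tauto

lemma onp_dvd_iff_norm (x : GaussianInt) :
    (⟨1, 1⟩ : GaussianInt) ∣ x ↔ 2 ∣ Zsqrtd.norm x := by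
  rw [onp_dvd_iff, onp_two_dvd_norm_iff]

lemma onp_pow_four (x : GaussianInt) (h : Zsqrtd.norm x = 1) : x ^ 4 = 1 := by
  obtain ⟨a, b⟩ := x
  have hre : a * a + b * b = 1 := by
    rw [Zsqrtd.norm_def] at h; linear_combination h
  have h1 : -1 ≤ a := by nlinarith
  have h2 : a ≤ 1 := by nlinarith
  have h3 : -1 ≤ b := by nlinarith
  have h4 : b ≤ 1 := by nlinarith
  interval_cases a <;> interval_cases b <;> simp_all <;> decide


/-- Euler-style form of odd norm-perfect Gaussian integers.
`α` has prime factorization `ε * ∏ πᵢ ^ kᵢ` with `ε` a unit and the `πᵢ`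
pairwise non-associate Gaussian primes; `σ(α) = ∏ σ(πᵢ^{kᵢ})` where
`σ(π^k) = 1 + π + ⋯ + π^k`, and norm-perfect means `N(σ(α)) = 2 N(α)`. -/
theorem odd_norm_perfect_form (α : GaussianInt) (n : ℕ)
    (ε : GaussianInt) (hε : IsUnit ε)
    (π : ℕ → GaussianInt) (k : ℕ → ℕ)
    (hprime : ∀ i ∈ Finset.range n, Prime (π i))
    (hpos : ∀ i ∈ Finset.range n, 0 < k i)
    (hassoc : ∀ i ∈ Finset.range n, ∀ j ∈ Finset.range n, i ≠ j →
      ¬ Associated (π i) (π j))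
    (hfact : α = ε * ∏ i ∈ Finset.range n, π i ^ k i)
    (hodd : ¬ (⟨1, 1⟩ : GaussianInt) ∣ α)
    (hnormperfect :
      Zsqrtd.norm (∏ i ∈ Finset.range n, ∑ j ∈ Finset.range (k i + 1), π i ^ j) =
        2 * Zsqrtd.norm α) :
    ∃ (p γ : GaussianInt) (m : ℕ), Prime p ∧ Odd m ∧ 0 < m ∧ ¬ p ∣ γ ∧
      α = p ^ m * γ ^ 2 := by
  classical
  -- each π i is odd
  have hπodd : ∀ i ∈ Finset.range n, ¬ (⟨1, 1⟩ : GaussianInt) ∣ π i := by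
    intro i hi hdvd
    apply hodd
    rw [hfact]
    refine Dvd.dvd.mul_left ?_ ε
    exact dvd_trans (hdvd.trans (dvd_pow_self _ (hpos i hi).ne'))
      (Finset.dvd_prod_of_mem _ hi)
  -- norms
  set e : ℕ → ℤ := fun i => Zsqrtd.norm (∑ j ∈ Finset.range (k i + 1), π i ^ j) with he
  have hprodeq : ∏ i ∈ Finset.range n, e i = 2 * Zsqrtd.norm α := by
    rw [← hnormperfect]
    exact (map_prod Zsqrtd.normMonoidHom
      (fun i => ∑ j ∈ Finset.range (k i + 1), π i ^ j) (Finset.range n)).symm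
  have hNα : ¬ (2 : ℤ) ∣ Zsqrtd.norm α := by
    rw [← onp_dvd_iff_norm]; exact hodd
  -- key parity characterization
  have hkey : ∀ i ∈ Finset.range n, ((2 : ℤ) ∣ e i ↔ Odd (k i)) := by
    intro i hi
    rw [he]
    simp only
    rw [← onp_dvd_iff_norm]
    have hd1 : (⟨1, 1⟩ : GaussianInt) ∣ π i - 1 := by
      rw [onp_dvd_iff]
      have h0 := hπodd i hi
      rw [onp_dvd_iff] at h0
      rw [Int.even_iff] at h0 ⊢
      simp only [Zsqrtd.re_sub, Zsqrtd.im_sub, Zsqrtd.re_one, Zsqrtd.im_one]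
      omega
    have hdiff : (⟨1, 1⟩ : GaussianInt) ∣
        (∑ j ∈ Finset.range (k i + 1), π i ^ j) - ((k i + 1 : ℕ) : GaussianInt) := by
      have hsum : (∑ j ∈ Finset.range (k i + 1), (π i ^ j - 1)) =
          (∑ j ∈ Finset.range (k i + 1), π i ^ j) - ((k i + 1 : ℕ) : GaussianInt) := by
        rw [Finset.sum_sub_distrib]
        simp
      rw [← hsum]
      exact Finset.dvd_sum fun j _ => hd1.trans (sub_one_dvd_pow_sub_one _ _)
    have hiff : ((⟨1, 1⟩ : GaussianInt) ∣ ∑ j ∈ Finset.range (k i + 1), π i ^ j) ↔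
        ((⟨1, 1⟩ : GaussianInt) ∣ ((k i + 1 : ℕ) : GaussianInt)) := by
      constructor
      · intro h
        have := dvd_sub h hdiff
        rwa [sub_sub_cancel] at this
      · intro h
        have := dvd_add hdiff h
        rwa [sub_add_cancel] at this
    rw [hiff, onp_dvd_iff]
    simp only [Zsqrtd.re_natCast, Zsqrtd.im_natCast, add_zero]
    rw [Int.even_coe_nat, Nat.even_add_one, Nat.not_even_iff_odd]
  -- the set of odd exponents
  set S : Finset ℕ := (Finset.range n).filter (fun i => Odd (k i)) with hSdef
  have hS1 : S.Nonempty := by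
    have h2 : (2 : ℤ) ∣ ∏ i ∈ Finset.range n, e i := by
      rw [hprodeq]; exact dvd_mul_right 2 _
    obtain ⟨i, hi, hdvd⟩ := (Int.prime_two.dvd_finset_prod_iff e).mp h2
    exact ⟨i, Finset.mem_filter.mpr ⟨hi, (hkey i hi).mp hdvd⟩⟩
  have hS2 : S.card ≤ 1 := by
    by_contra hgt
    push_neg at hgt
    obtain ⟨a, ha, b, hb, hab⟩ := Finset.one_lt_card.mp hgt
    have ha' : a ∈ Finset.range n := (Finset.mem_filter.mp ha).1
    have hb' : b ∈ Finset.range n := (Finset.mem_filter.mp hb).1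
    have hda : (2 : ℤ) ∣ e a := (hkey a ha').mpr (Finset.mem_filter.mp ha).2
    have hdb : (2 : ℤ) ∣ e b := (hkey b hb').mpr (Finset.mem_filter.mp hb).2
    have hb'' : b ∈ (Finset.range n).erase a := Finset.mem_erase.mpr ⟨hab.symm, hb'⟩
    have h4 : (4 : ℤ) ∣ ∏ i ∈ Finset.range n, e i := by
      rw [← Finset.mul_prod_erase _ _ ha', ← Finset.mul_prod_erase _ _ hb'']
      have : (4 : ℤ) = 2 * 2 := by norm_num
      rw [this]
      exact mul_dvd_mul hda (hdb.mul_right _)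
    rw [hprodeq] at h4
    obtain ⟨c, hc⟩ := h4
    exact hNα ⟨c, by linarith⟩
  have hScard : S.card = 1 := le_antisymm hS2 (Finset.card_pos.mpr hS1)
  obtain ⟨i₀, hSeq⟩ := Finset.card_eq_one.mp hScard
  have hi₀S : i₀ ∈ S := hSeq ▸ Finset.mem_singleton_self i₀
  have hi₀ : i₀ ∈ Finset.range n := (Finset.mem_filter.mp hi₀S).1
  have hm : Odd (k i₀) := (Finset.mem_filter.mp hi₀S).2
  have heven : ∀ j ∈ (Finset.range n).erase i₀, k j / 2 * 2 = k j := by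
    intro j hj
    have hj' : j ∈ Finset.range n := (Finset.mem_erase.mp hj).2
    have hjne : j ≠ i₀ := (Finset.mem_erase.mp hj).1
    have : ¬ Odd (k j) := by
      intro hodd'
      have hjS : j ∈ S := by
        rw [hSdef, Finset.mem_filter]; exact ⟨hj', hodd'⟩
      rw [hSeq] at hjS
      exact hjne (Finset.mem_singleton.mp hjS)
    rw [Nat.not_odd_iff_even] at this
    obtain ⟨c, hc⟩ := this
    omega
  -- construct the witnesses
  set m : ℕ := k i₀ with hmdef
  have hu4 : ε ^ 4 = 1 :=
    onp_pow_four ε ((Zsqrtd.norm_eq_one_iff' (by norm_num) ε).mpr hε)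
  have hpow : ∀ j : ℕ, ε ^ j = ε ^ (j % 4) := by
    intro j
    conv_lhs => rw [← Nat.div_add_mod j 4]
    rw [pow_add, pow_mul, hu4, one_pow, one_mul]
  have hmod : m % 4 = 1 ∨ m % 4 = 3 := by
    obtain ⟨t, ht⟩ := hm; omega
  have hUm : (ε ^ (m % 4)) ^ m = ε := by
    rcases hmod with h | h <;> rw [h, ← pow_mul, hpow]
    · rw [show 1 * m % 4 = 1 by omega, pow_one]
    · rw [show 3 * m % 4 = 1 by omega, pow_one]
  set γ : GaussianInt := ∏ j ∈ (Finset.range n).erase i₀, π j ^ (k j / 2) with hγ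
  have hγsq : γ ^ 2 = ∏ j ∈ (Finset.range n).erase i₀, π j ^ k j := by
    rw [hγ, ← Finset.prod_pow]
    exact Finset.prod_congr rfl fun j hj => by rw [← pow_mul, heven j hj]
  refine ⟨ε ^ (m % 4) * π i₀, γ, m, ?_, hm, hpos i₀ hi₀, ?_, ?_⟩
  · -- prime
    have hun : IsUnit (ε ^ (m % 4)) := hε.pow _
    have hassoc' : Associated (π i₀) (ε ^ (m % 4) * π i₀) :=
      ⟨hun.unit, by rw [IsUnit.unit_spec]; ring⟩
    exact hassoc'.prime (hprime i₀ hi₀)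
  · -- not dvd
    intro hd
    have hπd : π i₀ ∣ γ := (dvd_mul_left (π i₀) (ε ^ (m % 4))).trans hd
    rw [hγ] at hπd
    obtain ⟨j, hj, hdj⟩ :=
      ((hprime i₀ hi₀).dvd_finset_prod_iff _).mp hπd
    have hdvdπ : π i₀ ∣ π j := (hprime i₀ hi₀).dvd_of_dvd_pow hdj
    have hj' : j ∈ Finset.range n := (Finset.mem_erase.mp hj).2
    have hjne : i₀ ≠ j := fun h => (Finset.mem_erase.mp hj).1 h.symm
    exact hassoc i₀ hi₀ j hj' hjne
      ((hprime i₀ hi₀).associated_of_dvd (hprime j hj') hdvdπ)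
  · -- equation
    rw [hfact, hγsq, mul_pow, hUm, ← Finset.mul_prod_erase _ _ hi₀]
    ring
end

section
/- If α is an odd perfect Gaussian integer, i.e., σ(α) = (1+i)·α and (1+i) ∤ α, then α = π^k · γ² for some Gaussian prime π, odd positive integer k, and Gaussian integer γ with π ∤ γ. -/
open GaussianInt Zsqrtd Finset

def gmod2 : GaussianInt →+* ZMod 2 where
  toFun z := (z.re : ZMod 2) + (z.im : ZMod 2)
  map_one' := by simp
  map_zero' := by simp
  map_mul' z w := by
    simp only [Zsqrtd.re_mul, Zsqrtd.im_mul]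
    push_cast
    have : ∀ a b c d : ZMod 2, a*c + (-1)*b*d + (a*d + b*c) = (a+b)*(c+d) := by decide
    exact this _ _ _ _
  map_add' z w := by
    simp only [Zsqrtd.re_add, Zsqrtd.im_add]
    push_cast
    ring

lemma delta_dvd_iff (z : GaussianInt) :
    (⟨1, 1⟩ : GaussianInt) ∣ z ↔ gmod2 z = 0 := by
  constructor
  · rintro ⟨w, rfl⟩
    rw [map_mul]
    have h : gmod2 (⟨1,1⟩ : GaussianInt) = 0 := by
      show ((1:ℤ) : ZMod 2) + ((1:ℤ) : ZMod 2) = 0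
      decide
    rw [h, zero_mul]
  · intro h
    have h2 : (2 : ℤ) ∣ z.re + z.im := by
      have : ((z.re + z.im : ℤ) : ZMod 2) = 0 := by push_cast; exact h
      exact (ZMod.intCast_zmod_eq_zero_iff_dvd _ 2).mp this
    obtain ⟨m, hm⟩ := h2
    refine ⟨⟨m, m - z.re⟩, ?_⟩
    ext
    · simp [Zsqrtd.re_mul]
    · simp [Zsqrtd.im_mul]; omega

set_option maxHeartbeats 1000000 in
set_option synthInstance.maxHeartbeats 400000 in
lemma prime_delta : Prime (⟨1, 1⟩ : GaussianInt) := by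
  rw [← irreducible_iff_prime]
  constructor
  · intro hu
    have := Zsqrtd.norm_eq_one_iff.mpr hu
    simp [Zsqrtd.norm_def] at this
  · intro a b hab
    have hnorm : (Zsqrtd.norm a).natAbs * (Zsqrtd.norm b).natAbs = 2 := by
      have h2 : Zsqrtd.norm (⟨1,1⟩ : GaussianInt) = 2 := by simp [Zsqrtd.norm_def]
      rw [← Int.natAbs_mul, ← Zsqrtd.norm_mul, ← hab, h2]; rfl
    have hd : (Zsqrtd.norm a).natAbs ∣ 2 := ⟨_, hnorm.symm⟩
    rcases (Nat.prime_two.eq_one_or_self_of_dvd _ hd) with h | h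
    · exact Or.inl (Zsqrtd.norm_eq_one_iff.mp h)
    · right
      apply Zsqrtd.norm_eq_one_iff.mp
      rw [h] at hnorm
      omega

/-- key: for π not divisible by 1+i, (1+i) ∣ 1+π+⋯+π^k ↔ k odd -/
lemma delta_dvd_sum_iff (p : GaussianInt) (hp : ¬ (⟨1,1⟩ : GaussianInt) ∣ p) (k : ℕ) :
    ((⟨1,1⟩ : GaussianInt) ∣ ∑ j ∈ Finset.range (k+1), p ^ j) ↔ Odd k := by
  rw [delta_dvd_iff]
  have hp1 : gmod2 p = 1 := by
    rw [delta_dvd_iff] at hp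
    revert hp; generalize gmod2 p = x; revert x; decide
  rw [map_sum]
  simp only [map_pow, hp1, one_pow]
  rw [Finset.sum_const, Finset.card_range, nsmul_eq_mul, mul_one]
  rw [ZMod.natCast_eq_zero_iff, Nat.odd_iff]
  omega

lemma unit_pow_four (ε : GaussianInt) (hε : IsUnit ε) : ε ^ 4 = 1 := by
  have h1 : (Zsqrtd.norm ε).natAbs = 1 := Zsqrtd.norm_eq_one_iff.mpr hε
  have hn : Zsqrtd.norm ε = ε.re * ε.re + ε.im * ε.im := by
    simp [Zsqrtd.norm_def]
  rw [hn] at h1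
  have hr : 0 ≤ ε.re * ε.re := mul_self_nonneg _
  have hi : 0 ≤ ε.im * ε.im := mul_self_nonneg _
  have h2 : (ε.re * ε.re = 1 ∧ ε.im * ε.im = 0) ∨ (ε.re * ε.re = 0 ∧ ε.im * ε.im = 1) := by
    omega
  have key : ((ε.re = 1 ∨ ε.re = -1) ∧ ε.im = 0) ∨ (ε.re = 0 ∧ (ε.im = 1 ∨ ε.im = -1)) := by
    rcases h2 with ⟨h3, h4⟩ | ⟨h3, h4⟩
    · exact Or.inl ⟨mul_self_eq_one_iff.mp h3, mul_self_eq_zero.mp h4⟩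
    · exact Or.inr ⟨mul_self_eq_zero.mp h3, mul_self_eq_one_iff.mp h4⟩
  have h4 : ε ^ 4 = ε*ε*(ε*ε) := by ring
  rw [h4]
  rcases key with ⟨hr1 | hr1, hi1⟩ | ⟨hr1, hi1 | hi1⟩ <;>
    · ext <;> simp [Zsqrtd.re_mul, Zsqrtd.im_mul, hr1, hi1]

/-- Euler-style form of odd perfect Gaussian integers.
`α` has prime factorization `ε * ∏ πᵢ ^ kᵢ` with `ε` a unit and the `πᵢ`
pairwise non-associate first-quadrant Gaussian primes; perfect means
`σ(α) = (1+i) α` where `σ(α) = ∏ (1 + πᵢ + ⋯ + πᵢ^{kᵢ})`. -/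
theorem odd_perfect_form (α : GaussianInt) (n : ℕ)
    (ε : GaussianInt) (hε : IsUnit ε)
    (π : ℕ → GaussianInt) (k : ℕ → ℕ)
    (hprime : ∀ i ∈ Finset.range n, Prime (π i))
    (hquad : ∀ i ∈ Finset.range n, 0 < (π i).re ∧ 0 ≤ (π i).im)
    (hpos : ∀ i ∈ Finset.range n, 0 < k i)
    (hassoc : ∀ i ∈ Finset.range n, ∀ j ∈ Finset.range n, i ≠ j →
      ¬ Associated (π i) (π j))
    (hfact : α = ε * ∏ i ∈ Finset.range n, π i ^ k i)
    (hodd : ¬ (⟨1, 1⟩ : GaussianInt) ∣ α)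
    (hperfect :
      (∏ i ∈ Finset.range n, ∑ j ∈ Finset.range (k i + 1), π i ^ j) =
        (⟨1, 1⟩ : GaussianInt) * α) :
    ∃ (p γ : GaussianInt) (m : ℕ), Prime p ∧ Odd m ∧ 0 < m ∧ ¬ p ∣ γ ∧
      α = p ^ m * γ ^ 2 := by
  set δ : GaussianInt := ⟨1, 1⟩ with hδdef
  have hδ : Prime δ := prime_delta
  -- no π i is divisible by δ
  have hπα : ∀ i ∈ Finset.range n, π i ∣ α := by
    intro i hi
    rw [hfact]
    exact Dvd.dvd.mul_left
      ((dvd_pow_self (π i) (hpos i hi).ne').trans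
        (Finset.dvd_prod_of_mem (fun i => π i ^ k i) hi)) ε
  have hδπ : ∀ i ∈ Finset.range n, ¬ δ ∣ π i := fun i hi h =>
    hodd (h.trans (hπα i hi))
  -- δ divides the product of sigma factors
  have hδprod : δ ∣ ∏ i ∈ Finset.range n, ∑ j ∈ Finset.range (k i + 1), π i ^ j :=
    ⟨α, hperfect⟩
  obtain ⟨i₀, hi₀, hi₀dvd⟩ := hδ.exists_mem_finset_dvd hδprod
  have hoddk : Odd (k i₀) := (delta_dvd_sum_iff _ (hδπ i₀ hi₀) _).mp hi₀dvd
  -- all other exponents are even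
  have hsplit : ∏ i ∈ Finset.range n, (∑ j ∈ Finset.range (k i + 1), π i ^ j) =
      (∑ j ∈ Finset.range (k i₀ + 1), π i₀ ^ j) *
        ∏ i ∈ (Finset.range n).erase i₀, (∑ j ∈ Finset.range (k i + 1), π i ^ j) :=
    (Finset.mul_prod_erase _ _ hi₀).symm
  have heven : ∀ j ∈ (Finset.range n).erase i₀, k j = 2 * (k j / 2) := by
    intro j hj
    obtain ⟨hjne, hjr⟩ := Finset.mem_erase.mp hj
    by_contra hne
    have hoddj : Odd (k j) := by
      rcases Nat.even_or_odd (k j) with he | ho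
      · obtain ⟨t, ht⟩ := he
        exact absurd (by omega : k j = 2 * (k j / 2)) hne
      · exact ho
    have hδj : δ ∣ ∑ l ∈ Finset.range (k j + 1), π j ^ l :=
      (delta_dvd_sum_iff _ (hδπ j hjr) _).mpr hoddj
    have h2 : δ * δ ∣ δ * α := by
      rw [← hperfect, hsplit]
      exact mul_dvd_mul hi₀dvd (hδj.trans (Finset.dvd_prod_of_mem _ hj))
    exact hodd ((mul_dvd_mul_iff_left hδ.ne_zero).mp h2)
  -- assemble
  set m := k i₀ with hm
  set γ : GaussianInt := ∏ j ∈ (Finset.range n).erase i₀, π j ^ (k j / 2) with hγ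
  refine ⟨ε ^ m * π i₀, γ, m, ?_, hoddk, hpos i₀ hi₀, ?_, ?_⟩
  · have ha : Associated (π i₀) (ε ^ m * π i₀) :=
      ⟨(hε.pow m).unit, by rw [mul_comm, IsUnit.unit_spec]⟩
    exact ha.prime (hprime i₀ hi₀)
  · intro hp
    have hπγ : π i₀ ∣ γ := (Dvd.intro_left _ rfl : π i₀ ∣ ε ^ m * π i₀).trans hp
    obtain ⟨j, hj, hjd⟩ := (hprime i₀ hi₀).exists_mem_finset_dvd hπγ
    obtain ⟨hjne, hjr⟩ := Finset.mem_erase.mp hj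
    have hd : π i₀ ∣ π j := (hprime i₀ hi₀).dvd_of_dvd_pow hjd
    exact hassoc i₀ hi₀ j hjr hjne.symm
      ((hprime i₀ hi₀).associated_of_dvd (hprime j hjr) hd)
  · -- α = (ε^m * π i₀)^m * γ^2
    have hεm : ε ^ (m * m) = ε := by
      obtain ⟨s, hs⟩ := hoddk
      have hmm : m * m = 4 * (s * s + s) + 1 := by rw [hs]; ring
      rw [hmm, pow_succ, pow_mul, unit_pow_four ε hε, one_pow, one_mul]
    have hprodsplit : ∏ i ∈ Finset.range n, π i ^ k i =
        π i₀ ^ m * ∏ i ∈ (Finset.range n).erase i₀, π i ^ k i :=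
      (Finset.mul_prod_erase _ _ hi₀).symm
    have hγ2 : ∏ i ∈ (Finset.range n).erase i₀, π i ^ k i = γ ^ 2 := by
      rw [hγ, ← Finset.prod_pow]
      refine Finset.prod_congr rfl fun j hj => ?_
      rw [← pow_mul, mul_comm (k j / 2) 2, ← heven j hj]
    rw [hfact, hprodsplit, hγ2, mul_pow, ← pow_mul, hεm]
    ring
end

section
/- If α is an odd norm-perfect Gaussian integer with prime factorization α = ε·∏_{i=1}^{n} π_i^{k_i}, then N(σ(α)) ≡ 2 (mod 4), and exactly one index i satisfies N(σ(π_i^{k_i})) ≡ 2 (mod 4) while for all other indices N(σ(π_j^{k_j})) ≡ 1 (mod 4). -/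
private lemma norm_eq_sq (z : GaussianInt) : Zsqrtd.norm z = z.re * z.re + z.im * z.im := by
  simp only [Zsqrtd.norm]; ring

private lemma odd_norm_mod4 (z : GaussianInt) (h : ¬ (2:ℤ) ∣ Zsqrtd.norm z) :
    Zsqrtd.norm z ≡ 1 [ZMOD 4] := by
  rw [norm_eq_sq] at h ⊢
  rcases Int.even_or_odd z.re with ⟨c, hc⟩ | ⟨c, hc⟩ <;>
    rcases Int.even_or_odd z.im with ⟨d, hd⟩ | ⟨d, hd⟩
  · exact absurd ⟨2*c*c + 2*d*d, by rw [hc, hd]; ring⟩ h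
  · refine Int.ModEq.symm ?_
    rw [Int.modEq_iff_dvd]
    exact ⟨c*c + d*d + d, by rw [hc, hd]; ring⟩
  · refine Int.ModEq.symm ?_
    rw [Int.modEq_iff_dvd]
    exact ⟨c*c + c + d*d, by rw [hc, hd]; ring⟩
  · exact absurd ⟨2*c*c + 2*c + 2*d*d + 2*d + 1, by rw [hc, hd]; ring⟩ h

/-- For an odd norm-perfect Gaussian integer `α = ε ∏ πᵢ^{kᵢ}`,
`N(σ(α)) ≡ 2 (mod 4)` and exactly one factor has `N(σ(πᵢ^{kᵢ})) ≡ 2 (mod 4)`,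
the others being `≡ 1 (mod 4)`. -/
theorem odd_norm_perfect_factor_norms (α : GaussianInt) (n : ℕ)
    (ε : GaussianInt) (hε : IsUnit ε)
    (π : ℕ → GaussianInt) (k : ℕ → ℕ)
    (hprime : ∀ i ∈ Finset.range n, Prime (π i))
    (hpos : ∀ i ∈ Finset.range n, 0 < k i)
    (hassoc : ∀ i ∈ Finset.range n, ∀ j ∈ Finset.range n, i ≠ j →
      ¬ Associated (π i) (π j))
    (hfact : α = ε * ∏ i ∈ Finset.range n, π i ^ k i)
    (hodd : ¬ (⟨1, 1⟩ : GaussianInt) ∣ α)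
    (hnormperfect :
      Zsqrtd.norm (∏ i ∈ Finset.range n, ∑ j ∈ Finset.range (k i + 1), π i ^ j) =
        2 * Zsqrtd.norm α) :
    Zsqrtd.norm (∏ i ∈ Finset.range n, ∑ j ∈ Finset.range (k i + 1), π i ^ j)
        ≡ 2 [ZMOD 4] ∧
    ∃ i ∈ Finset.range n,
      Zsqrtd.norm (∑ j ∈ Finset.range (k i + 1), π i ^ j) ≡ 2 [ZMOD 4] ∧
      ∀ j ∈ Finset.range n, j ≠ i →
        Zsqrtd.norm (∑ l ∈ Finset.range (k j + 1), π j ^ l) ≡ 1 [ZMOD 4] := by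
  -- N(α) is odd
  have hNodd : ¬ (2:ℤ) ∣ Zsqrtd.norm α := by
    intro h2
    apply hodd
    have hab : (2:ℤ) ∣ α.re + α.im := by
      have h1 : (2:ℤ) ∣ (α.re - 1) * α.re := by
        have := Int.even_mul_succ_self (α.re - 1)
        simpa using this.two_dvd
      have h2' : (2:ℤ) ∣ (α.im - 1) * α.im := by
        have := Int.even_mul_succ_self (α.im - 1)
        simpa using this.two_dvd
      have key : (2:ℤ) ∣ (α.re * α.re + α.im * α.im) - (α.re + α.im) := by
        have := dvd_add h1 h2'
        rw [show (α.re * α.re + α.im * α.im) - (α.re + α.im) = (α.re - 1) * α.re + (α.im - 1) * α.im by ring]; exact this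
      rw [norm_eq_sq] at h2
      have := dvd_sub h2 key
      simpa using this
    refine ⟨⟨(α.re + α.im)/2, (α.im - α.re)/2⟩, ?_⟩
    have ⟨t, ht⟩ := hab
    apply Zsqrtd.ext <;>
      simp [Zsqrtd.re_mul, Zsqrtd.im_mul] <;> omega
  set f : ℕ → ℤ := fun i => Zsqrtd.norm (∑ j ∈ Finset.range (k i + 1), π i ^ j) with hf
  have hprod : Zsqrtd.norm (∏ i ∈ Finset.range n, ∑ j ∈ Finset.range (k i + 1), π i ^ j)
      = ∏ i ∈ Finset.range n, f i := by
    exact map_prod (Zsqrtd.normMonoidHom) _ _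
  have hPeq : ∏ i ∈ Finset.range n, f i = 2 * Zsqrtd.norm α := by
    rw [← hprod]; exact hnormperfect
  -- the whole product mod 4
  obtain ⟨w, hw⟩ : Odd (Zsqrtd.norm α) := Int.odd_iff.2 (by omega)
  have hwhole : Zsqrtd.norm (∏ i ∈ Finset.range n, ∑ j ∈ Finset.range (k i + 1), π i ^ j)
      ≡ 2 [ZMOD 4] := by
    rw [hnormperfect]
    refine Int.ModEq.symm ?_
    rw [Int.modEq_iff_dvd]
    exact ⟨w, by rw [hw]; ring⟩
  refine ⟨hwhole, ?_⟩
  -- existence of an even factor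
  have h2P : (2:ℤ) ∣ ∏ i ∈ Finset.range n, f i := ⟨Zsqrtd.norm α, hPeq⟩
  obtain ⟨i, hi, h2i⟩ := (Int.prime_two.dvd_finset_prod_iff f).1 h2P
  -- all other factors are odd
  have hothers : ∀ j ∈ Finset.range n, j ≠ i → ¬ (2:ℤ) ∣ f j := by
    intro j hj hji h2j
    have hsub : {i, j} ⊆ Finset.range n := by
      intro x hx; rcases Finset.mem_insert.1 hx with rfl | hx
      · exact hi
      · rw [Finset.mem_singleton] at hx; exact hx ▸ hj
    have h4 : (4:ℤ) ∣ ∏ x ∈ Finset.range n, f x := by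
      have hd1 : (4:ℤ) ∣ ∏ x ∈ ({i, j} : Finset ℕ), f x := by
        rw [Finset.prod_pair (Ne.symm hji)]
        exact mul_dvd_mul h2i h2j
      exact hd1.trans (Finset.prod_dvd_prod_of_subset _ _ f hsub)
    rw [hPeq] at h4
    obtain ⟨t, ht⟩ := h4
    exact hNodd ⟨t, by omega⟩
  refine ⟨i, hi, ?_, fun j hj hji => odd_norm_mod4 _ (hothers j hj hji)⟩
  -- the distinguished factor is ≡ 2 mod 4
  obtain ⟨u, hu⟩ := h2i
  have hrest : Zsqrtd.norm α = u * ∏ x ∈ (Finset.range n).erase i, f x := by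
    have := Finset.mul_prod_erase (Finset.range n) f hi
    rw [hPeq, hu] at this
    have : 2 * Zsqrtd.norm α = 2 * (u * ∏ x ∈ (Finset.range n).erase i, f x) := by
      rw [← this]; ring
    exact mul_left_cancel₀ two_ne_zero this
  have huodd : ¬ (2:ℤ) ∣ u := by
    intro ⟨v, hv⟩
    exact hNodd ⟨v * ∏ x ∈ (Finset.range n).erase i, f x, by rw [hrest, hv]; ring⟩
  obtain ⟨v, hv⟩ : Odd u := Int.odd_iff.2 (by omega)
  show f i ≡ 2 [ZMOD 4]
  refine Int.ModEq.symm ?_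
  rw [Int.modEq_iff_dvd]
  exact ⟨v, by rw [hu, hv]; ring⟩
end
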